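/- Let R be a commutative ring and S a commutative subring of the matrix ring M_m(R). For any n×n matrix M with entries in S, viewed as an mn×mn matrix over R, the determinant of M over R equals the determinant over R of the m×m matrix obtained by taking the determinant of M over S. That is, det_R(det_S M) = det_R M. -/
import Mathlib


/-- The row-determinant of a square matrix over a not-necessarily-commutative ring:
each product is ordered by row index. Over a commutative ring it agrees with `Matrix.det`. -/
def rowDet {A : Type*} [Ring A] {n : ℕ} (X : Matrix (Fin n) (Fin n) A) : A :=
  ∑ π : Equiv.Perm (Fin n),
    (Equiv.Perm.sign π : ℤ) • (List.ofFn fun i => X i (π i)).prod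

namespace DetDetAux

open Matrix Polynomial

variable {R : Type*} [CommRing R] {m : ℕ}

/-- Block-expand a matrix over `T` along a ring hom `T →+* Mₘ(R)`. -/
def big {T : Type*} [CommRing T] {k : ℕ} (φ : T →+* Matrix (Fin m) (Fin m) R)
    (M : Matrix (Fin k) (Fin k) T) : Matrix (Fin k × Fin m) (Fin k × Fin m) R :=
  Matrix.of fun p q => φ (M p.1 q.1) p.2 q.2

lemma big_mul {T : Type*} [CommRing T] {k : ℕ} (φ : T →+* Matrix (Fin m) (Fin m) R)
    (M N : Matrix (Fin k) (Fin k) T) : big φ (M * N) = big φ M * big φ N := by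
  ext ⟨i, a⟩ ⟨j, b⟩
  simp only [big, of_apply, Matrix.mul_apply, _root_.map_sum, _root_.map_mul, Matrix.sum_apply,
    Fintype.sum_prod_type]

/-- The index equivalence splitting off the first block row/column. -/
def succEquiv (m n : ℕ) : (Fin m ⊕ (Fin n × Fin m)) ≃ (Fin (n + 1) × Fin m) where
  toFun x := Sum.elim (fun a => ((0 : Fin (n + 1)), a)) (fun p => (p.1.succ, p.2)) x
  invFun p := Fin.cases (Sum.inl p.2) (fun i => Sum.inr (i, p.2)) p.1
  left_inv x := by rcases x with a | ⟨i, a⟩ <;> simp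
  right_inv p := by
    obtain ⟨i, a⟩ := p
    refine Fin.cases ?_ (fun j => ?_) i <;> simp

lemma det_big_lower {n : ℕ} (X : Matrix (Fin (n + 1) × Fin m) (Fin (n + 1) × Fin m) R)
    (h : ∀ (i : Fin n) (a b : Fin m), X (i.succ, a) (0, b) = 0) :
    X.det = (Matrix.of fun a b => X (0, a) (0, b)).det *
      (Matrix.of fun p q : Fin n × Fin m => X (p.1.succ, p.2) (q.1.succ, q.2)).det := by
  rw [← det_submatrix_equiv_self (succEquiv m n) X]
  have hX : X.submatrix (succEquiv m n) (succEquiv m n) =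
      fromBlocks (Matrix.of fun a b => X (0, a) (0, b))
        (Matrix.of fun a q => X (0, a) (q.1.succ, q.2)) 0
        (Matrix.of fun p q => X (p.1.succ, p.2) (q.1.succ, q.2)) := by
    ext x y
    rcases x with a | p <;> rcases y with b | q <;>
      simp [succEquiv, h]
  rw [hX, det_fromBlocks_zero₂₁]

lemma det_big_upper {n : ℕ} (X : Matrix (Fin (n + 1) × Fin m) (Fin (n + 1) × Fin m) R)
    (h : ∀ (j : Fin n) (a b : Fin m), X (0, a) (j.succ, b) = 0) :
    X.det = (Matrix.of fun a b => X (0, a) (0, b)).det *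
      (Matrix.of fun p q : Fin n × Fin m => X (p.1.succ, p.2) (q.1.succ, q.2)).det := by
  rw [← det_submatrix_equiv_self (succEquiv m n) X]
  have hX : X.submatrix (succEquiv m n) (succEquiv m n) =
      fromBlocks (Matrix.of fun a b => X (0, a) (0, b)) 0
        (Matrix.of fun p b => X (p.1.succ, p.2) (0, b))
        (Matrix.of fun p q => X (p.1.succ, p.2) (q.1.succ, q.2)) := by
    ext x y
    rcases x with a | p <;> rcases y with b | q <;>
      simp [succEquiv, h]
  rw [hX, det_fromBlocks_zero₁₂]

lemma det_big_diagonal {T : Type*} [CommRing T] {k : ℕ} (φ : T →+* Matrix (Fin m) (Fin m) R)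
    (d : Fin k → T) :
    (big φ (Matrix.diagonal d)).det = ∏ i, (φ (d i)).det := by
  have hb : big φ (Matrix.diagonal d) =
      (blockDiagonal fun i => φ (d i)).submatrix (Equiv.prodComm _ _) (Equiv.prodComm _ _) := by
    ext ⟨i, a⟩ ⟨j, b⟩
    simp only [big, of_apply, submatrix_apply, Equiv.prodComm_apply, Prod.swap_prod_mk,
      blockDiagonal_apply, Matrix.diagonal_apply]
    split_ifs with hij
    · subst hij; rfl
    · simp
  rw [hb, det_submatrix_equiv_self, det_blockDiagonal]

lemma det_firstcol {A : Type*} [CommRing A] {n : ℕ} (K : Matrix (Fin (n + 1)) (Fin (n + 1)) A)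
    (h : ∀ i : Fin n, K i.succ 0 = 0) :
    K.det = K 0 0 * (K.submatrix Fin.succ Fin.succ).det := by
  rw [det_succ_column_zero, Finset.sum_eq_single 0]
  · simp
  · intro i _ hi
    obtain ⟨j, rfl⟩ := Fin.eq_succ_of_ne_zero hi
    simp [h]
  · simp

lemma key {m : ℕ} : ∀ (n : ℕ) (R : Type*) [CommRing R] (T : Type*) [CommRing T]
    (φ : T →+* Matrix (Fin m) (Fin m) R)
    (M : Matrix (Fin n) (Fin n) T), (big φ M).det = (φ M.det).det := by
  intro n
  induction n with
  | zero =>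
    intro R _ T _ φ M
    simp [Matrix.det_isEmpty, _root_.map_one, Matrix.det_one]
  | succ n ih =>
    intro R instR T instT φ M
    classical
    -- polynomial extension of φ
    set f : T →+* Matrix (Fin m) (Fin m) R[X] := (Polynomial.C (R := R)).mapMatrix.comp φ with hf
    have hfc : ∀ t : T, Commute (f t) (Matrix.scalar (Fin m) (X : R[X])) :=
      fun t => (Matrix.scalar_commute _ (fun r' => Commute.all _ _) _).symm
    set φ' : T[X] →+* Matrix (Fin m) (Fin m) R[X] :=
      Polynomial.eval₂RingHom' f (Matrix.scalar (Fin m) (X : R[X])) hfc with hφ'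
    have hφ'C : ∀ t : T, φ' (Polynomial.C t) = (φ t).map Polynomial.C := by
      intro t
      simp [hφ', eval₂RingHom', hf, RingHom.mapMatrix_apply]
    have hφ'X : φ' Polynomial.X = Matrix.scalar (Fin m) (X : R[X]) := by
      simp [hφ', eval₂RingHom']
    -- the matrices
    set a : T[X] := Polynomial.C (M 0 0) + Polynomial.X with ha
    set M' : Matrix (Fin (n + 1)) (Fin (n + 1)) T[X] :=
      Matrix.of fun i j => if i = 0 ∧ j = 0 then a else Polynomial.C (M i j) with hM'
    set P : Matrix (Fin (n + 1)) (Fin (n + 1)) T[X] :=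
      Matrix.diagonal (fun i => if i = 0 then 1 else a) +
        Matrix.of (fun i j => if j = 0 ∧ i ≠ 0 then -(M' i 0) else 0) with hP
    have hM'00 : M' 0 0 = a := by simp [hM']
    have hM'succ0 : ∀ i : Fin n, M' i.succ 0 = Polynomial.C (M i.succ 0) := by
      intro i; simp [hM', Fin.succ_ne_zero i]
    -- entries of P * M'
    have hPmul : ∀ i j, (P * M') i j =
        (if i = 0 then 1 else a) * M' i j +
          (if i = 0 then 0 else -(M' i 0) * M' 0 j) := by
      intro i j
      rw [hP, Matrix.add_mul, Matrix.add_apply, Matrix.diagonal_mul]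
      congr 1
      rw [Matrix.mul_apply, Finset.sum_eq_single 0]
      · by_cases hi : i = 0 <;> simp [hi]
      · intro k _ hk; simp [hk]
      · simp
    have h00 : (P * M') 0 0 = a := by
      rw [hPmul]; simp [hM'00]
    have hcol : ∀ i : Fin n, (P * M') i.succ 0 = 0 := by
      intro i
      rw [hPmul]
      simp only [Fin.succ_ne_zero i, if_false, hM'00, hM'succ0]
      ring
    set N : Matrix (Fin n) (Fin n) T[X] := (P * M').submatrix Fin.succ Fin.succ with hN
    -- P facts
    have hProw : ∀ j : Fin n, P 0 j.succ = 0 := by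
      intro j
      simp [hP, Matrix.diagonal_apply, (Fin.succ_ne_zero j).symm, Fin.succ_ne_zero j]
    have hP00 : P 0 0 = 1 := by simp [hP]
    have hPsub : P.submatrix Fin.succ Fin.succ = Matrix.diagonal (fun _ : Fin n => a) := by
      ext i j
      by_cases hij : i = j
      · subst hij; simp [hP, Fin.succ_ne_zero]
      · have : i.succ ≠ j.succ := fun h => hij (Fin.succ_injective _ h)
        simp [hP, Matrix.diagonal_apply, this, hij, Fin.succ_ne_zero]
    have hPlow : P.BlockTriangular OrderDual.toDual := by
      intro i j hij
      have hij' : i < j := hij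
      have h1 : i ≠ j := ne_of_lt hij'
      have h2 : ¬(j = 0 ∧ i ≠ 0) := by
        rintro ⟨rfl, -⟩
        exact absurd hij' (by simp)
      simp [hP, Matrix.diagonal_apply, h1, h2]
    have hdetP : P.det = a ^ n := by
      rw [det_of_lowerTriangular P hPlow, Fin.prod_univ_succ, hP00, one_mul]
      have : ∀ i : Fin n, P i.succ i.succ = a := by
        intro i
        have := congrFun (congrFun hPsub i) i
        simpa [Matrix.diagonal_apply] using this
      simp [this]
    -- T-side identity
    have hT : a ^ n * M'.det = a * N.det := by
      have h1 : P.det * M'.det = (P * M').det := (det_mul P M').symm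
      have h2 : (P * M').det = a * N.det := by
        rw [det_firstcol _ hcol, h00, hN]
      rw [hdetP] at h1
      rw [h1, h2]
    -- R-side
    set d : R[X] := (φ' a).det with hd
    have hφ'a : φ' a = Matrix.charmatrix (-(φ (M 0 0))) := by
      rw [ha, map_add, hφ'C, hφ'X, Matrix.charmatrix]
      ext i j
      simp only [RingHom.mapMatrix_apply, Matrix.add_apply, Matrix.sub_apply, Matrix.map_apply,
        Matrix.neg_apply, map_neg, sub_neg_eq_add, add_comm]
    have hdmonic : d.Monic := by
      rw [hd, hφ'a]
      exact Matrix.charpoly_monic _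
    have hreg : IsRegular (d ^ n) := (hdmonic.pow n).isRegular
    have hbigPM : (big φ' (P * M')).det = d * (big φ' N).det := by
      have hz : ∀ (i : Fin n) (a' b : Fin m), (big φ' (P * M')) (i.succ, a') (0, b) = 0 := by
        intro i a' b
        show φ' ((P * M') i.succ 0) a' b = 0
        rw [hcol i, _root_.map_zero]
        rfl
      rw [det_big_lower (big φ' (P * M')) hz]
      congr 1
      show (Matrix.of fun a' b => φ' ((P * M') 0 0) a' b).det = d
      rw [h00]
      rfl
    have hbigP : (big φ' P).det = d ^ n := by
      have hz : ∀ (j : Fin n) (a' b : Fin m), (big φ' P) (0, a') (j.succ, b) = 0 := by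
        intro j a' b
        show φ' (P 0 j.succ) a' b = 0
        rw [hProw j, _root_.map_zero]
        rfl
      rw [det_big_upper (big φ' P) hz]
      have hc : (Matrix.of fun a' b => (big φ' P) (0, a') (0, b)) = φ' (P 0 0) := by
        ext a' b; rfl
      have hmin : (Matrix.of fun p q : Fin n × Fin m =>
          (big φ' P) (p.1.succ, p.2) (q.1.succ, q.2)) =
          big φ' (P.submatrix Fin.succ Fin.succ) := rfl
      rw [hc, hP00, _root_.map_one, Matrix.det_one, one_mul, hmin, hPsub, det_big_diagonal]
      simp [Finset.prod_const, hd]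
    have hIH : (big φ' N).det = (φ' N.det).det := ih (Polynomial R) (Polynomial T) φ' N
    have hR : d ^ n * (big φ' M').det = d * (φ' N.det).det := by
      rw [← hIH, ← hbigPM, big_mul, det_mul, hbigP]
    -- map T-side identity through φ' and det
    have hT' : d ^ n * (φ' M'.det).det = d * (φ' N.det).det := by
      have := congrArg (fun t => (φ' t).det) hT
      simpa [_root_.map_mul, _root_.map_pow, det_mul, det_pow, hd] using this
    have hMain : (big φ' M').det = (φ' M'.det).det := by
      apply hreg.left
      simp only [smul_eq_mul]
      rw [hR, ← hT']
    -- evaluation at 0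
    set εR : R[X] →+* R := Polynomial.evalRingHom 0 with hεR
    set εT : T[X] →+* T := Polynomial.evalRingHom 0 with hεT
    have hcomp : (εR.mapMatrix.comp φ' : T[X] →+* Matrix (Fin m) (Fin m) R) = φ.comp εT := by
      apply Polynomial.ringHom_ext
      · intro t
        simp only [RingHom.comp_apply, hφ'C, RingHom.mapMatrix_apply]
        ext i j
        simp [hεR, hεT]
      · simp only [RingHom.comp_apply, hφ'X, RingHom.mapMatrix_apply]
        ext i j
        simp [Matrix.scalar_apply, Matrix.diagonal_apply, hεR, hεT, apply_ite]
    have hc1 : ∀ x : T[X], (φ' x).map εR = φ (εT x) := by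
      intro x
      have := DFunLike.congr_fun hcomp x
      simpa [RingHom.mapMatrix_apply] using this
    have hM'map : M'.map εT = M := by
      ext i j
      rw [hM']
      simp only [Matrix.map_apply, of_apply]
      split_ifs with hij
      · obtain ⟨rfl, rfl⟩ := hij
        simp [ha, hεT]
      · simp [hεT]
    have hbigmap : (big φ' M').map εR = big φ M := by
      ext ⟨i, a'⟩ ⟨j, b⟩
      show εR (φ' (M' i j) a' b) = φ (M i j) a' b
      have h1 : ((φ' (M' i j)).map εR) a' b = (φ (εT (M' i j))) a' b := by rw [hc1]
      have h2 : εT (M' i j) = M i j := by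
        have := congrFun (congrFun hM'map i) j
        simpa [Matrix.map_apply] using this
      rw [← h2]
      exact h1
    calc (big φ M).det = ((big φ' M').map εR).det := by rw [hbigmap]
      _ = εR (big φ' M').det := (εR.map_det _).symm
      _ = εR (φ' M'.det).det := by rw [hMain]
      _ = ((φ' M'.det).map εR).det := εR.map_det _
      _ = (φ (εT M'.det)).det := by rw [hc1]
      _ = (φ (M'.map εT).det).det := by rw [εT.map_det, RingHom.mapMatrix_apply]
      _ = (φ M.det).det := by rw [hM'map]

end DetDetAux

theorem det_det_blocks_of_commSubring {R : Type*} [CommRing R] {m n : ℕ}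
    (S : Subring (Matrix (Fin m) (Fin m) R))
    (hS : ∀ x y : S, x * y = y * x)
    (M : Matrix (Fin n) (Fin n) S) :
    Matrix.det ((rowDet M : S) : Matrix (Fin m) (Fin m) R) =
      Matrix.det (Matrix.of fun p q : Fin n × Fin m =>
        ((M p.1 q.1 : Matrix (Fin m) (Fin m) R)) p.2 q.2) := by
  letI : CommRing S := { (inferInstance : Ring S) with mul_comm := fun a b => hS a b }
  have hrow : rowDet M = M.det := by
    rw [← Matrix.det_transpose M, Matrix.det_apply, rowDet]
    refine Finset.sum_congr rfl fun π _ => ?_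
    rw [List.prod_ofFn, Units.smul_def]
    simp [Matrix.transpose_apply]
  rw [hrow]
  exact (DetDetAux.key n R S S.subtype M).symm
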